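/- Let f : ℝ^d → ℝ be L-smooth, h : ℝ^d → ℝ convex, g_1,...,g_m convex and L-smooth, γ > 0, and define F(x) = f(x) + h(x) + γ·max_k [g_k(x)]_+. Fix x₀, y ∈ ℝ^d and η with η·L(1+γ) ≤ 1/8, and let x̌ minimize over x the function ⟨y, x⟩ + h(x) + γ·max_k [g_k(x₀) + ⟨∇g_k(x₀), x − x₀⟩]_+ + (1/2η)‖x − x₀‖². Define x̂ as the minimizer of u ↦ F(u) + ((1+ηL)/2η)‖u − x₀‖². Then ‖x̂ − x₀‖² ≤ 8η²‖∇f(x₀) − y‖² + 3‖x̌ − x₀‖². -/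

import Mathlib

open RealInnerProductSpace

section Helpers

variable {E : Type*} [NormedAddCommGroup E] [InnerProductSpace ℝ E] [CompleteSpace E]

/-- tangent line lemma for convex differentiable functions -/
lemma convex_tangent_aux (g : E → ℝ) (G : E) (x₀ u : E)
    (hconv : ConvexOn ℝ Set.univ g) (hg : HasGradientAt g G x₀) :
    g x₀ + ⟪G, u - x₀⟫ ≤ g u := by
  set w := u - x₀ with hw
  by_cases hwz : w = 0
  · have : u = x₀ := by rwa [hw, sub_eq_zero] at hwz
    simp [this, hwz]
  set φ : ℝ → E := fun t => x₀ + t • w with hφ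
  have hder : HasDerivAt (fun t => g (φ t)) ⟪G, w⟫ 0 := by
    have hc : HasDerivAt φ w 0 := by
      simpa [hφ] using ((hasDerivAt_id (0:ℝ)).smul_const w).const_add x₀
    have hf' : HasFDerivAt g (InnerProductSpace.toDual ℝ E G) (φ 0) := by
      have := (hasGradientAt_iff_hasFDerivAt).mp hg
      simpa [hφ] using this
    have := hf'.comp_hasDerivAt 0 hc; simp at this; exact this
  have hφconv : ConvexOn ℝ Set.univ (fun t => g (φ t)) := by
    refine ⟨convex_univ, fun a _ b _ p q hp hq hpq => ?_⟩
    have : φ (p * a + q * b) = p • φ a + q • φ b := by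
      simp only [hφ]
      have h2 : p • (x₀ + a • w) + q • (x₀ + b • w) = (p+q) • x₀ + (p*a+q*b) • w := by
        module
      rw [h2, hpq, one_smul]
    show g (φ (p • a + q • b)) ≤ p * g (φ a) + q * g (φ b)
    have hpt : (p • a + q • b : ℝ) = p * a + q * b := by simp [smul_eq_mul]
    rw [hpt, this]
    simpa using hconv.2 (Set.mem_univ (φ a)) (Set.mem_univ (φ b)) hp hq hpq
  have := hφconv.le_slope_of_hasDerivAt (Set.mem_univ 0) (Set.mem_univ 1)
    one_pos hder
  rw [slope_def_field] at this
  simp only [hφ] at this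
  simp only [one_smul, zero_smul, add_zero] at this
  have h1 : x₀ + w = u := by rw [hw]; abel
  rw [h1] at this
  have hfin : ⟪G, w⟫ ≤ g u - g x₀ := by
    simpa [div_one] using this
  linarith

variable {E : Type*} [NormedAddCommGroup E] [InnerProductSpace ℝ E] [CompleteSpace E]

/-- descent lemma: quadratic bound for functions with Lipschitz gradient -/
lemma smooth_quad_bound (f : E → ℝ) (Gf : E → E) (L : ℝ) (hL : 0 ≤ L)
    (hf : ∀ x, HasGradientAt f (Gf x) x)
    (hfL : ∀ u v, ‖Gf u - Gf v‖ ≤ L * ‖u - v‖) (u v : E) :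
    |f v - f u - ⟪Gf u, v - u⟫| ≤ L / 2 * ‖v - u‖ ^ 2 := by
  set w := v - u with hw
  set c : ℝ → E := fun t => u + t • w with hc
  have hcont : Continuous c := by continuity
  have hGcont : Continuous Gf := by
    refine (LipschitzWith.of_dist_le_mul (K := L.toNNReal) ?_).continuous
    intro a b
    simp only [dist_eq_norm]
    calc ‖Gf a - Gf b‖ ≤ L * ‖a - b‖ := hfL a b
    _ ≤ L.toNNReal * ‖a - b‖ := by
        gcongr; exact Real.le_coe_toNNReal L
  have hder : ∀ t : ℝ, HasDerivAt (fun s => f (c s)) ⟪Gf (c t), w⟫ t := by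
    intro t
    have hct : HasDerivAt c w t := by
      simpa [hc] using ((hasDerivAt_id t).smul_const w).const_add u
    have hf' : HasFDerivAt f (InnerProductSpace.toDual ℝ E (Gf (c t))) (c t) :=
      (hasGradientAt_iff_hasFDerivAt).mp (hf (c t))
    have := hf'.comp_hasDerivAt t hct; simp at this; exact this
  have hdcont : Continuous fun t => (⟪Gf (c t), w⟫ : ℝ) :=
    (hGcont.comp hcont).inner continuous_const
  have hint : f (c 1) - f (c 0) = ∫ t in (0:ℝ)..1, ⟪Gf (c t), w⟫ := by
    rw [intervalIntegral.integral_eq_sub_of_hasDerivAt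
      (fun t _ => hder t) (hdcont.intervalIntegrable 0 1)]
  have hc0 : c 0 = u := by simp [hc]
  have hc1 : c 1 = v := by simp [hc, hw]
  have hsplit : f v - f u - ⟪Gf u, w⟫
      = ∫ t in (0:ℝ)..1, (⟪Gf (c t), w⟫ - ⟪Gf u, w⟫) := by
    rw [intervalIntegral.integral_sub (hdcont.intervalIntegrable 0 1)
      (intervalIntegrable_const)]
    simp [← hint, hc0, hc1]
  rw [hsplit]
  have hbound : ∀ t ∈ Set.Ioc (0:ℝ) 1,
      ‖(⟪Gf (c t), w⟫ - ⟪Gf u, w⟫ : ℝ)‖ ≤ L * ‖w‖ ^ 2 * t := by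
    intro t ht
    have : (⟪Gf (c t), w⟫ - ⟪Gf u, w⟫ : ℝ) = ⟪Gf (c t) - Gf u, w⟫ := by
      rw [inner_sub_left]
    rw [this]
    calc ‖(⟪Gf (c t) - Gf u, w⟫ : ℝ)‖ ≤ ‖Gf (c t) - Gf u‖ * ‖w‖ :=
        norm_inner_le_norm _ _
    _ ≤ (L * ‖c t - u‖) * ‖w‖ := by gcongr; exact hfL _ _
    _ = L * ‖w‖ ^ 2 * t := by
        have : c t - u = t • w := by simp [hc]
        rw [this, norm_smul]
        simp [abs_of_pos ht.1]
        ring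
  have habs : |∫ t in (0:ℝ)..1, (⟪Gf (c t), w⟫ - ⟪Gf u, w⟫ : ℝ)|
      ≤ ∫ t in (0:ℝ)..1, L * ‖w‖ ^ 2 * t := by
    rw [← Real.norm_eq_abs]
    refine le_trans (intervalIntegral.norm_integral_le_abs_of_norm_le (g := fun t => L * ‖w‖ ^ 2 * t) ?_ ?_) ?_
    · filter_upwards [MeasureTheory.ae_restrict_mem measurableSet_Ioc] with t ht
      exact hbound t (by simpa [Set.uIoc_of_le (zero_le_one' ℝ)] using ht)
    · exact (continuous_const.mul continuous_id').intervalIntegrable 0 1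
    · rw [abs_of_nonneg]
      apply intervalIntegral.integral_nonneg (by norm_num)
      intro t ht
      have := ht.1
      positivity
  have hval : (∫ t in (0:ℝ)..1, L * ‖w‖ ^ 2 * t) = L / 2 * ‖w‖ ^ 2 := by
    rw [intervalIntegral.integral_const_mul, integral_id]
    ring
  rw [hval] at habs
  exact habs

variable {E : Type*} [NormedAddCommGroup E] [InnerProductSpace ℝ E] [CompleteSpace E]

lemma q_id_aux (a b x₀ : E) (t : ℝ) :
    ‖(a + t • (b - a)) - x₀‖ ^ 2
      = (1 - t) * ‖a - x₀‖ ^ 2 + t * ‖b - x₀‖ ^ 2 - t * (1 - t) * ‖b - a‖ ^ 2 := by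
  have h1 : (a + t • (b - a)) - x₀ = (a - x₀) + t • (b - a) := by abel
  have h2 : b - x₀ = (a - x₀) + (b - a) := by abel
  rw [h1, h2, norm_add_sq_real, norm_add_sq_real, real_inner_smul_right, norm_smul]
  simp only [Real.norm_eq_abs, mul_pow, sq_abs]
  ring

lemma strong_min_aux (ψ : E → ℝ) (hψ : ConvexOn ℝ Set.univ ψ) (c : ℝ) (hc : 0 < c)
    (x₀ xv : E) (hmin : ∀ z, ψ xv + c * ‖xv - x₀‖ ^ 2 ≤ ψ z + c * ‖z - x₀‖ ^ 2) (x : E) :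
    ψ xv + c * ‖xv - x₀‖ ^ 2 + c * ‖x - xv‖ ^ 2 ≤ ψ x + c * ‖x - x₀‖ ^ 2 := by
  set A : ℝ := (ψ x + c * ‖x - x₀‖ ^ 2) - (ψ xv + c * ‖xv - x₀‖ ^ 2) with hA
  set B : ℝ := ‖x - xv‖ ^ 2 with hB
  suffices hkey : c * B ≤ A by rw [hA] at hkey; linarith [hkey]
  have key : ∀ t : ℝ, 0 < t → t ≤ 1 → (1 - t) * (c * B) ≤ A := by
    intro t ht0 ht1
    set xt := xv + t • (x - xv) with hxt
    have hid : ‖xt - x₀‖ ^ 2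
        = (1 - t) * ‖xv - x₀‖ ^ 2 + t * ‖x - x₀‖ ^ 2 - t * (1 - t) * ‖x - xv‖ ^ 2 :=
      q_id_aux xv x x₀ t
    have hconv : ψ xt ≤ (1 - t) * ψ xv + t * ψ x := by
      have hxx : xt = (1 - t) • xv + t • x := by rw [hxt]; module
      rw [hxx]
      simpa [smul_eq_mul] using
        hψ.2 (Set.mem_univ xv) (Set.mem_univ x) (by linarith) ht0.le (by ring)
    have hm := hmin xt
    rw [hid] at hm
    have h3 : t * ((1 - t) * (c * B)) ≤ t * A := by
      rw [hA, hB]; nlinarith [hm, hconv]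
    exact le_of_mul_le_mul_left h3 ht0
  have htend : Filter.Tendsto (fun t : ℝ => (1 - t) * (c * B)) (nhdsWithin 0 (Set.Ioi 0))
      (nhds (c * B)) := by
    have : Filter.Tendsto (fun t : ℝ => (1 - t) * (c * B)) (nhds 0) (nhds ((1 - 0) * (c * B))) :=
      ((continuous_const.sub continuous_id).mul continuous_const).tendsto 0
    simpa using this.mono_left nhdsWithin_le_nhds
  refine le_of_tendsto htend ?_
  filter_upwards [Ioc_mem_nhdsGT_of_mem (Set.mem_Ico.mpr ⟨le_refl 0, zero_lt_one⟩)] with t ht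
  exact key t ht.1 ht.2

lemma convexOn_sup'_aux {ι : Type*} (s : Finset ι) (hs : s.Nonempty) (φ : ι → E → ℝ)
    (hφ : ∀ k ∈ s, ConvexOn ℝ Set.univ (φ k)) :
    ConvexOn ℝ Set.univ (fun x => s.sup' hs fun k => φ k x) := by
  refine ⟨convex_univ, fun x _ z _ a b ha hb hab => ?_⟩
  apply Finset.sup'_le
  intro k hk
  have h1 : φ k (a • x + b • z) ≤ a * φ k x + b * φ k z := by
    simpa [smul_eq_mul] using (hφ k hk).2 (Set.mem_univ x) (Set.mem_univ z) ha hb hab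
  have h2 : φ k x ≤ s.sup' hs fun j => φ j x := Finset.le_sup' (fun j => φ j x) hk
  have h3 : φ k z ≤ s.sup' hs fun j => φ j z := Finset.le_sup' (fun j => φ j z) hk
  have h4 := mul_le_mul_of_nonneg_left h2 ha
  have h5 := mul_le_mul_of_nonneg_left h3 hb
  simp only [smul_eq_mul]
  linarith

lemma convexOn_const_add_inner (c : ℝ) (v : E) :
    ConvexOn ℝ Set.univ (fun x : E => c + ⟪v, x⟫) := by
  refine ⟨convex_univ, fun x _ z _ a b ha hb hab => ?_⟩
  simp only [inner_add_right, real_inner_smul_right, smul_eq_mul]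
  have : a * c + b * c = c := by rw [← add_mul, hab, one_mul]
  linarith

end Helpers

set_option maxHeartbeats 1000000 in
/-- Prox-linear proximity lemma: the Moreau-type point `x̂` stays close to the iterate:
`‖x̂ − x₀‖² ≤ 8η²‖∇f(x₀) − y‖² + 3‖x̌ − x₀‖²`. -/
theorem prox_linear_proximity {d m : ℕ} [NeZero m]
    (L γ η : ℝ) (hL : 0 < L) (hγ : 0 < γ) (hη : 0 < η)
    (hstep : η * L * (1 + γ) ≤ 1 / 8)
    (f : EuclideanSpace ℝ (Fin d) → ℝ)
    (Gf : EuclideanSpace ℝ (Fin d) → EuclideanSpace ℝ (Fin d))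
    (hf : ∀ x, HasGradientAt f (Gf x) x)
    (hfL : ∀ u v, ‖Gf u - Gf v‖ ≤ L * ‖u - v‖)
    (h : EuclideanSpace ℝ (Fin d) → ℝ) (hh : ConvexOn ℝ Set.univ h)
    (g : Fin m → EuclideanSpace ℝ (Fin d) → ℝ)
    (Gg : Fin m → EuclideanSpace ℝ (Fin d) → EuclideanSpace ℝ (Fin d))
    (hgconv : ∀ k, ConvexOn ℝ Set.univ (g k))
    (hg : ∀ k x, HasGradientAt (g k) (Gg k x) x)
    (hgL : ∀ k u v, ‖Gg k u - Gg k v‖ ≤ L * ‖u - v‖)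
    (F : EuclideanSpace ℝ (Fin d) → ℝ)
    (hF : F = fun x => f x + h x +
      γ * Finset.univ.sup' Finset.univ_nonempty (fun k => max (g k x) 0))
    (x₀ y xv xh : EuclideanSpace ℝ (Fin d))
    (Φ : EuclideanSpace ℝ (Fin d) → ℝ)
    (hΦ : Φ = fun x => ⟪y, x⟫ + h x
      + γ * Finset.univ.sup' Finset.univ_nonempty
          (fun k => max (g k x₀ + ⟪Gg k x₀, x - x₀⟫) 0)
      + 1 / (2 * η) * ‖x - x₀‖ ^ 2)
    (hxv : ∀ x, Φ xv ≤ Φ x)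
    (hxh : ∀ u, F xh + (1 + η * L) / (2 * η) * ‖xh - x₀‖ ^ 2
      ≤ F u + (1 + η * L) / (2 * η) * ‖u - x₀‖ ^ 2) :
    ‖xh - x₀‖ ^ 2 ≤ 8 * η ^ 2 * ‖Gf x₀ - y‖ ^ 2 + 3 * ‖xv - x₀‖ ^ 2 := by
  set P : EuclideanSpace ℝ (Fin d) → ℝ :=
    fun x => Finset.univ.sup' Finset.univ_nonempty (fun k => max (g k x) 0) with hP
  set Pt : EuclideanSpace ℝ (Fin d) → ℝ := fun x => Finset.univ.sup' Finset.univ_nonempty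
    (fun k => max (g k x₀ + ⟪Gg k x₀, x - x₀⟫) 0) with hPt
  set ψ : EuclideanSpace ℝ (Fin d) → ℝ := fun x => ⟪y, x⟫ + h x + γ * Pt x with hψdef
  -- convexity of ψ
  have hψconv : ConvexOn ℝ Set.univ ψ := by
    have h1 : ConvexOn ℝ Set.univ (fun x : EuclideanSpace ℝ (Fin d) => ⟪y, x⟫) := by
      simpa using convexOn_const_add_inner 0 y
    have h2 : ConvexOn ℝ Set.univ Pt := by
      rw [hPt]
      apply convexOn_sup'_aux
      intro k _
      have haff : ConvexOn ℝ Set.univ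
          (fun x : EuclideanSpace ℝ (Fin d) => (g k x₀ - ⟪Gg k x₀, x₀⟫) + ⟪Gg k x₀, x⟫) :=
        convexOn_const_add_inner _ _
      have hmax := haff.sup (convexOn_const (0:ℝ) convex_univ)
      have heq : (fun x : EuclideanSpace ℝ (Fin d) => max (g k x₀ + ⟪Gg k x₀, x - x₀⟫) 0)
          = (fun x : EuclideanSpace ℝ (Fin d) =>
              (g k x₀ - ⟪Gg k x₀, x₀⟫) + ⟪Gg k x₀, x⟫) ⊔ (fun _ => 0) := by
        funext x
        simp only [Pi.sup_apply, inner_sub_right]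
        ring_nf
      rw [heq]
      exact hmax
    have h3 := (h1.add hh).add (h2.smul hγ.le)
    have heq2 : ψ = ((fun x : EuclideanSpace ℝ (Fin d) => ⟪y, x⟫) + h) + γ • Pt := by
      funext x
      simp [hψdef, Pi.add_apply, Pi.smul_apply, smul_eq_mul]
    rw [heq2]
    exact h3
  -- A6 : strong minimality of xv for Φ
  have hA6 : ψ xv + 1/(2*η) * ‖xv - x₀‖^2 + 1/(2*η) * ‖xh - xv‖^2
      ≤ ψ xh + 1/(2*η) * ‖xh - x₀‖^2 := by
    have hmin : ∀ z, ψ xv + 1/(2*η) * ‖xv - x₀‖^2 ≤ ψ z + 1/(2*η) * ‖z - x₀‖^2 := by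
      intro z
      have hz := hxv z
      rw [hΦ] at hz
      exact hz
    exact strong_min_aux ψ hψconv (1/(2*η)) (by positivity) x₀ xv hmin xh
  -- A5 : hxh at xv
  have hA5 : f xh + h xh + γ * P xh + (1 + η*L)/(2*η) * ‖xh - x₀‖^2
      ≤ f xv + h xv + γ * P xv + (1 + η*L)/(2*η) * ‖xv - x₀‖^2 := by
    have hz := hxh xv
    rw [hF] at hz
    exact hz
  -- A1, A2 : smoothness of f
  have hA1 : f xv ≤ f x₀ + ⟪Gf x₀, xv - x₀⟫ + L/2 * ‖xv - x₀‖^2 := by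
    have := (abs_le.mp (smooth_quad_bound f Gf L hL.le hf hfL x₀ xv)).2
    linarith
  have hA2 : f x₀ + ⟪Gf x₀, xh - x₀⟫ - L/2 * ‖xh - x₀‖^2 ≤ f xh := by
    have := (abs_le.mp (smooth_quad_bound f Gf L hL.le hf hfL x₀ xh)).1
    linarith
  -- A3 : P xv ≤ Pt xv + L/2 qv
  have hA3 : P xv ≤ Pt xv + L/2 * ‖xv - x₀‖^2 := by
    rw [hP, hPt]
    apply Finset.sup'_le
    intro k _
    have hk := (abs_le.mp (smooth_quad_bound (g k) (Gg k) L hL.le (hg k) (hgL k) x₀ xv)).2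
    have hq : (0:ℝ) ≤ L/2 * ‖xv - x₀‖^2 := by positivity
    have hle : max (g k xv) 0 ≤ max (g k x₀ + ⟪Gg k x₀, xv - x₀⟫) 0 + L/2 * ‖xv - x₀‖^2 := by
      apply max_le
      · linarith [le_max_left (g k x₀ + ⟪Gg k x₀, xv - x₀⟫) (0:ℝ)]
      · linarith [le_max_right (g k x₀ + ⟪Gg k x₀, xv - x₀⟫) (0:ℝ)]
    refine hle.trans ?_
    exact add_le_add_left (Finset.le_sup' (fun j => max (g j x₀ + ⟪Gg j x₀, xv - x₀⟫) 0)
      (Finset.mem_univ k)) _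
  -- A4 : Pt xh ≤ P xh
  have hA4 : Pt xh ≤ P xh := by
    rw [hP, hPt]
    apply Finset.sup'_le
    intro k _
    have htan : g k x₀ + ⟪Gg k x₀, xh - x₀⟫ ≤ g k xh :=
      convex_tangent_aux (g k) (Gg k x₀) x₀ xh (hgconv k) (hg k x₀)
    exact (max_le_max htan (le_refl (0:ℝ))).trans
      (Finset.le_sup' (fun j => max (g j xh) 0) (Finset.mem_univ k))
  -- inner product algebra
  have hA8 : ⟪Gf x₀, xv - x₀⟫ - ⟪Gf x₀, xh - x₀⟫ - ⟪y, xv⟫ + ⟪y, xh⟫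
      = ⟪Gf x₀ - y, xv - xh⟫ := by
    simp only [inner_sub_left, inner_sub_right]
    ring
  -- combine: key inequality
  have hMc : (1 + η*L)/(2*η) = 1/(2*η) + L/2 := by field_simp
  have hA3' : γ * P xv ≤ γ * Pt xv + γ * (L/2) * ‖xv - x₀‖^2 := by nlinarith [hA3]
  have hA4' : γ * Pt xh ≤ γ * P xh := by nlinarith [hA4]
  rw [hMc] at hA5
  have key : 1/(2*η) * ‖xh - xv‖^2
      ≤ ⟪Gf x₀ - y, xv - xh⟫ + (L/2*(2+γ)) * ‖xv - x₀‖^2 := by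
    simp only [hψdef] at hA6
    ring_nf at hA5 hA1 hA2 hA3' hA4' hA6 hA8 ⊢
    linarith [hA5, hA1, hA2, hA3', hA4', hA6, hA8]
  -- Cauchy-Schwarz and Young
  have hCS : ⟪Gf x₀ - y, xv - xh⟫ ≤ ‖Gf x₀ - y‖ * ‖xh - xv‖ := by
    have h0 := real_inner_le_norm (Gf x₀ - y) (xv - xh)
    rw [norm_sub_rev xv xh] at h0
    exact h0
  have hYoung : ‖Gf x₀ - y‖ * ‖xh - xv‖
      ≤ η * ‖Gf x₀ - y‖^2 + 1/(4*η) * ‖xh - xv‖^2 := by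
    have h4 : 0 < 4*η := by positivity
    have hsq := sq_nonneg (2*η*‖Gf x₀ - y‖ - ‖xh - xv‖)
    have e1 : 1/(4*η) * (4*η) = 1 := by field_simp
    nlinarith [hsq, hη, mul_pos hη hη]
  -- step size bound
  have hCbound : L/2*(2+γ) ≤ 1/(8*η) := by
    rw [le_div_iff₀ (by positivity : (0:ℝ) < 8*η)]
    nlinarith [hstep, hL.le, hγ.le, hη.le]
  have hqvnn : (0:ℝ) ≤ ‖xv - x₀‖^2 := by positivity
  have key2 : 1/(4*η) * ‖xh - xv‖^2
      ≤ η * ‖Gf x₀ - y‖^2 + 1/(8*η) * ‖xv - x₀‖^2 := by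
    have h12 : 1/(2*η) = 1/(4*η) + 1/(4*η) := by field_simp; ring
    have hC : (L/2*(2+γ)) * ‖xv - x₀‖^2 ≤ 1/(8*η) * ‖xv - x₀‖^2 :=
      mul_le_mul_of_nonneg_right hCbound hqvnn
    ring_nf at key hCS hYoung hC ⊢
    linarith [key, hCS, hYoung, hC]
  have key3 : ‖xh - xv‖^2 ≤ 4*η^2*‖Gf x₀ - y‖^2 + 1/2 * ‖xv - x₀‖^2 := by
    have h4 : (0:ℝ) ≤ 4*η := by positivity
    have hm := mul_le_mul_of_nonneg_left key2 h4
    have e1 : (4*η) * (1/(4*η) * ‖xh - xv‖^2) = ‖xh - xv‖^2 := by field_simp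
    have e2 : (4*η) * (η*‖Gf x₀ - y‖^2 + 1/(8*η)*‖xv - x₀‖^2)
        = 4*η^2*‖Gf x₀ - y‖^2 + 1/2*‖xv - x₀‖^2 := by field_simp; ring
    rw [e1, e2] at hm
    exact hm
  -- triangle inequality
  have htri : ‖xh - x₀‖ ≤ ‖xh - xv‖ + ‖xv - x₀‖ := by
    have he : xh - x₀ = (xh - xv) + (xv - x₀) := by abel
    rw [he]; exact norm_add_le _ _
  have hfinal : ‖xh - x₀‖^2 ≤ 2*‖xh - xv‖^2 + 2*‖xv - x₀‖^2 := by
    nlinarith [htri, sq_nonneg (‖xh - xv‖ - ‖xv - x₀‖), norm_nonneg (xh - x₀),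
      norm_nonneg (xh - xv), norm_nonneg (xv - x₀)]
  linarith [hfinal, key3]
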